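/- arXiv:1109.1736 — 7 statements merged into one kernel-verified Lean document; each statement's English description precedes it below -/
import Mathlib

section
/- A compact Hausdorff space X has a small diagonal if and only if every ω₁-indexed sequence ⟨(x_α, y_α) : α < ω₁⟩ of pairs of points of X with x_α ≠ y_α for all α is ω₁-separated, i.e., there is an uncountable set A ⊆ ω₁ such that the closures of {x_α : α ∈ A} and {y_α : α ∈ A} are disjoint. -/
open Cardinal Set

/-- ω₁ as a (well-ordered) type. -/
noncomputable abbrev ω₁ : Type := (Cardinal.aleph 1).ord.ToType

/-- A topological space has a small diagonal if every uncountable subset of `X × X`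
disjoint from the diagonal has an uncountable subset whose closure is disjoint
from the diagonal. -/
def HasSmallDiagonal (X : Type*) [TopologicalSpace X] : Prop :=
  ∀ S : Set (X × X), ¬ S.Countable → (∀ p ∈ S, p.1 ≠ p.2) →
    ∃ T ⊆ S, ¬ T.Countable ∧ ∀ p ∈ closure T, p.1 ≠ p.2

lemma omega1_uncountable : ¬ (Set.univ : Set ω₁).Countable := by
  rw [Cardinal.countable_iff_lt_aleph_one, Cardinal.mk_univ, Cardinal.mk_ord_toType]
  exact lt_irrefl _

lemma pigeonhole_finset {α ι : Type*} {T : Set α} (hT : ¬ T.Countable)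
    (t : Finset ι) (g : ι → Set α) (hcov : T ⊆ ⋃ i ∈ t, g i) :
    ∃ i ∈ t, ¬ (T ∩ g i).Countable := by
  by_contra h
  push_neg at h
  apply hT
  have hsub : T ⊆ ⋃ i ∈ t, T ∩ g i := fun a ha => by
    rcases Set.mem_iUnion₂.1 (hcov ha) with ⟨i, hi, hgi⟩
    exact Set.mem_iUnion₂.2 ⟨i, hi, ha, hgi⟩
  exact (Set.Countable.biUnion t.countable_toSet h).mono hsub

lemma uncountable_preimage {α β : Type*} {f : α → β} {B : Set β}
    (hB : B ⊆ Set.range f) (hBc : ¬ B.Countable) : ¬ (f ⁻¹' B).Countable := by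
  intro h
  exact hBc (by
    have := h.image f
    rwa [Set.image_preimage_eq_of_subset hB] at this)

theorem smallDiagonal_iff_omega1_separated (X : Type*) [TopologicalSpace X]
    [CompactSpace X] [T2Space X] :
    HasSmallDiagonal X ↔
      ∀ x y : ω₁ → X, (∀ α, x α ≠ y α) →
        ∃ A : Set ω₁, ¬ A.Countable ∧
          Disjoint (closure (x '' A)) (closure (y '' A)) := by
  constructor
  · intro hsd x y hxy
    set f : ω₁ → X × X := fun α => (x α, y α) with hf
    by_cases hr : (Set.range f).Countable
    · -- some fiber is uncountable
      have : ∃ p ∈ Set.range f, ¬ (f ⁻¹' {p}).Countable := by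
        by_contra h
        push_neg at h
        apply omega1_uncountable
        have hsub : (Set.univ : Set ω₁) ⊆ ⋃ p ∈ Set.range f, f ⁻¹' {p} := by
          intro α _
          exact Set.mem_iUnion₂.2 ⟨f α, ⟨α, rfl⟩, rfl⟩
        exact (Set.Countable.biUnion hr h).mono hsub
      obtain ⟨p, ⟨α₀, hα₀⟩, hpc⟩ := this
      refine ⟨f ⁻¹' {p}, hpc, ?_⟩
      have hxA : x '' (f ⁻¹' {p}) ⊆ {p.1} := by
        rintro _ ⟨α, hα, rfl⟩
        simp only [Set.mem_preimage, Set.mem_singleton_iff] at hα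
        simp [← hα, hf]
      have hyA : y '' (f ⁻¹' {p}) ⊆ {p.2} := by
        rintro _ ⟨α, hα, rfl⟩
        simp only [Set.mem_preimage, Set.mem_singleton_iff] at hα
        simp [← hα, hf]
      have hne : p.1 ≠ p.2 := by
        rw [← hα₀]; exact hxy α₀
      refine Disjoint.mono (closure_minimal hxA isClosed_singleton)
        (closure_minimal hyA isClosed_singleton) ?_
      exact Set.disjoint_singleton.2 hne
    · obtain ⟨T, hTsub, hTc, hTd⟩ := hsd (Set.range f) hr
        (by rintro p ⟨α, rfl⟩; exact hxy α)
      set K := closure T with hK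
      have hKc : IsCompact K := isClosed_closure.isCompact
      choose U hU hUo V hV hVo hUV using
        fun k : K => exists_open_nhds_disjoint_closure (hTd k.1 k.2)
      obtain ⟨t, ht⟩ := hKc.elim_finite_subcover (fun k => U k ×ˢ V k)
        (fun k => (hUo k).prod (hVo k))
        (fun p hp => Set.mem_iUnion.2 ⟨⟨p, hp⟩,
          Set.mk_mem_prod (hU ⟨p, hp⟩) (hV ⟨p, hp⟩)⟩)
      obtain ⟨k, _, hkc⟩ := pigeonhole_finset hTc t (fun k => U k ×ˢ V k)
        (fun p hp => ht (subset_closure hp))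
      set B := T ∩ U k ×ˢ V k with hB
      refine ⟨f ⁻¹' B, uncountable_preimage (fun p hp => hTsub hp.1) hkc, ?_⟩
      have hxA : x '' (f ⁻¹' B) ⊆ U k := by
        rintro _ ⟨α, hα, rfl⟩
        exact hα.2.1
      have hyA : y '' (f ⁻¹' B) ⊆ V k := by
        rintro _ ⟨α, hα, rfl⟩
        exact hα.2.2
      exact Disjoint.mono (closure_mono hxA) (closure_mono hyA) (hUV k)
  · intro h S hS hdiag
    have hg : Nonempty (ω₁ ↪ ↥S) := by
      rw [← Cardinal.lift_mk_le', Cardinal.mk_ord_toType]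
      simp only [Cardinal.lift_aleph, Ordinal.lift_one, Cardinal.aleph_one_le_lift]
      rw [← not_lt, ← Cardinal.countable_iff_lt_aleph_one]
      exact hS
    obtain ⟨g⟩ := hg
    set x : ω₁ → X := fun α => ((g α : X × X)).1 with hx
    set y : ω₁ → X := fun α => ((g α : X × X)).2 with hy
    obtain ⟨A, hA, hdisj⟩ := h x y (fun α => hdiag _ (g α).2)
    refine ⟨(fun α => ((g α : X × X))) '' A, ?_, ?_, ?_⟩
    · rintro _ ⟨α, _, rfl⟩; exact (g α).2
    · intro hc
      apply hA
      have hinj : Function.Injective (fun α => ((g α : X × X))) :=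
        Subtype.val_injective.comp g.injective
      exact (hc.preimage hinj).mono (Set.subset_preimage_image _ _)
    · intro p hp
      have hsub : (fun α => ((g α : X × X))) '' A ⊆ (x '' A) ×ˢ (y '' A) := by
        rintro _ ⟨α, hα, rfl⟩
        exact ⟨⟨α, hα, rfl⟩, ⟨α, hα, rfl⟩⟩
      have := closure_mono hsub hp
      rw [closure_prod_eq] at this
      intro hpe
      exact Set.disjoint_left.mp hdisj this.1 (hpe ▸ this.2)
end

section
/- If f : X → Y is an irreducible continuous surjection between compact Hausdorff spaces, then X and Y have the same π-weight. -/
open Set Cardinal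

universe u

/-- `B` is a π-base: a family of nonempty open sets such that every nonempty open
set contains a member of the family. -/
def IsPiBase {X : Type u} [TopologicalSpace X] (B : Set (Set X)) : Prop :=
  (∀ b ∈ B, IsOpen b ∧ b.Nonempty) ∧
  ∀ U : Set X, IsOpen U → U.Nonempty → ∃ b ∈ B, b ⊆ U

/-- The π-weight of a topological space: the least cardinality of a π-base. -/
noncomputable def piWeight (X : Type u) [TopologicalSpace X] : Cardinal.{u} :=
  sInf {c : Cardinal.{u} | ∃ B : Set (Set X), IsPiBase B ∧ #B = c}

lemma isPiBase_univ_open {Z : Type u} [TopologicalSpace Z] :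
    IsPiBase {U : Set Z | IsOpen U ∧ U.Nonempty} :=
  ⟨fun _ hb => hb, fun U hU hUne => ⟨U, ⟨hU, hUne⟩, subset_rfl⟩⟩

lemma piWeight_set_nonempty (Z : Type u) [TopologicalSpace Z] :
    {c : Cardinal.{u} | ∃ B : Set (Set Z), IsPiBase B ∧ #B = c}.Nonempty :=
  ⟨_, _, isPiBase_univ_open, rfl⟩

theorem irreducible_piWeight_eq {X Y : Type u} [TopologicalSpace X]
    [TopologicalSpace Y] [CompactSpace X] [T2Space X] [CompactSpace Y] [T2Space Y]
    (f : X → Y) (hf : Continuous f) (hsurj : Function.Surjective f)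
    (hirr : ∀ C : Set X, IsClosed C → C ≠ Set.univ → f '' C ≠ Set.univ) :
    piWeight X = piWeight Y := by
  have hclosed : IsClosedMap f := hf.isClosedMap
  set sharp : Set X → Set Y := fun U => (f '' Uᶜ)ᶜ with hsharp
  have hso : ∀ U : Set X, IsOpen U → IsOpen (sharp U) := fun U hU =>
    (hclosed _ hU.isClosed_compl).isOpen_compl
  have hsne : ∀ U : Set X, IsOpen U → U.Nonempty → (sharp U).Nonempty := by
    intro U hU hUne
    rw [hsharp]
    simp only [nonempty_compl]
    apply hirr _ hU.isClosed_compl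
    intro h
    obtain ⟨x, hx⟩ := hUne
    have : x ∈ Uᶜ := h ▸ mem_univ x
    exact this hx
  have hmono : ∀ U V : Set X, U ⊆ V → sharp U ⊆ sharp V := by
    intro U V hUV
    exact compl_subset_compl.2 (image_mono (f := f) (compl_subset_compl.2 hUV))
  have hpre : ∀ U : Set X, f ⁻¹' (sharp U) ⊆ U := by
    intro U x hx
    by_contra hxU
    exact hx ⟨x, hxU, rfl⟩
  have hsub : ∀ V : Set Y, sharp (f ⁻¹' V) ⊆ V := by
    intro V y hy
    obtain ⟨x, rfl⟩ := hsurj y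
    by_contra hyV
    exact hy ⟨x, hyV, rfl⟩
  apply le_antisymm
  · -- piWeight X ≤ piWeight Y via preimages
    apply le_csInf (piWeight_set_nonempty Y)
    rintro c ⟨B, ⟨hB1, hB2⟩, rfl⟩
    have hπ : IsPiBase ((f ⁻¹' ·) '' B) := by
      constructor
      · rintro b ⟨b', hb', rfl⟩
        obtain ⟨hbo, y, hy⟩ := hB1 b' hb'
        obtain ⟨x, rfl⟩ := hsurj y
        exact ⟨hbo.preimage hf, x, hy⟩
      · intro U hU hUne
        obtain ⟨b, hb, hbsub⟩ := hB2 (sharp U) (hso U hU) (hsne U hU hUne)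
        exact ⟨f ⁻¹' b, mem_image_of_mem _ hb,
          (preimage_mono hbsub).trans (hpre U)⟩
    have hm : #((f ⁻¹' ·) '' B) ∈ {c : Cardinal.{u} | ∃ B : Set (Set X), IsPiBase B ∧ #B = c} :=
      ⟨_, hπ, rfl⟩
    exact (csInf_le' hm).trans (Cardinal.mk_image_le)
  · -- piWeight Y ≤ piWeight X via sharp
    apply le_csInf (piWeight_set_nonempty X)
    rintro c ⟨B, ⟨hB1, hB2⟩, rfl⟩
    have hπ : IsPiBase (sharp '' B) := by
      constructor
      · rintro b ⟨b', hb', rfl⟩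
        obtain ⟨hbo, hbne⟩ := hB1 b' hb'
        exact ⟨hso _ hbo, hsne _ hbo hbne⟩
      · intro V hV hVne
        obtain ⟨y, hy⟩ := hVne
        obtain ⟨x, rfl⟩ := hsurj y
        obtain ⟨b, hb, hbsub⟩ := hB2 (f ⁻¹' V) (hV.preimage hf) ⟨x, hy⟩
        exact ⟨sharp b, mem_image_of_mem _ hb,
          (hmono _ _ hbsub).trans (hsub V)⟩
    have hm : #(sharp '' B) ∈ {c : Cardinal.{u} | ∃ B : Set (Set Y), IsPiBase B ∧ #B = c} :=
      ⟨_, hπ, rfl⟩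
    exact (csInf_le' hm).trans (Cardinal.mk_image_le)
end

section
/- If X is a compact Hausdorff space in which some uncountable set A has a metrizable set of condensation points, and X has a small diagonal, then there is a co-countable subset B of A whose closure in X is metrizable. -/
open Set

section Aux

variable {X : Type*} [TopologicalSpace X]

def condSet (A : Set X) : Set X :=
  {x : X | ∀ U : Set X, IsOpen U → x ∈ U → ¬ (U ∩ A).Countable}

lemma isClosed_condSet (A : Set X) : IsClosed (condSet A) := by
  rw [← isOpen_compl_iff, isOpen_iff_forall_mem_open]
  intro x hx
  have hx' : ∃ U : Set X, IsOpen U ∧ x ∈ U ∧ (U ∩ A).Countable := by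
    by_contra h
    push_neg at h
    exact hx (fun U hU hxU => h U hU hxU)
  obtain ⟨U, hU, hxU, hc⟩ := hx'
  exact ⟨U, fun y hy hyK => hyK U hU hy hc, hU, hxU⟩

lemma exists_acc [CompactSpace X] {D : Set X} (hD : ¬ D.Countable) :
    ∃ p : X, ∀ U : Set X, IsOpen U → p ∈ U → ¬ (U ∩ D).Countable := by
  by_contra h
  push_neg at h
  choose U hUo hUm hUc using h
  obtain ⟨t, ht⟩ := isCompact_univ.elim_finite_subcover U hUo
    (fun x _ => mem_iUnion.mpr ⟨x, hUm x⟩)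
  apply hD
  have hsub : D ⊆ ⋃ i ∈ t, U i ∩ D := by
    intro x hx
    rcases mem_iUnion₂.mp (ht (mem_univ x)) with ⟨i, hi, hxi⟩
    exact mem_iUnion₂.mpr ⟨i, hi, hxi, hx⟩
  exact ((t.countable_toSet).biUnion fun i _ => hUc i).mono hsub

lemma countable_outside [CompactSpace X] {A : Set X} (D : Set X) (hDA : D ⊆ A)
    {O : Set X} (hO : IsOpen O) (hKO : condSet A ⊆ O) : (D \ O).Countable := by
  by_contra h
  obtain ⟨p, hp⟩ := exists_acc h
  have hpK : p ∈ condSet A := fun U hU hpU hc =>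
    hp U hU hpU (hc.mono (inter_subset_inter_right U (diff_subset.trans hDA)))
  apply hp O hO (hKO hpK)
  rw [Set.inter_diff_self]
  exact countable_empty


lemma key [CompactSpace X] [T2Space X] (hX : HasSmallDiagonal X)
    (A : Set X) (hA : ¬ A.Countable)
    (hm : TopologicalSpace.MetrizableSpace (condSet A)) :
    (A \ condSet A).Countable := by
  classical
  by_contra hCu
  set K : Set X := condSet A with hKdef
  have hKcl : IsClosed K := isClosed_condSet A
  have hKcpt : IsCompact K := hKcl.isCompact
  haveI : CompactSpace K := isCompact_iff_compactSpace.mp hKcpt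
  haveI := hm
  letI : MetricSpace K := TopologicalSpace.metrizableSpaceMetric K
  obtain ⟨p0, hp0⟩ := exists_acc hA
  haveI hKne : Nonempty K := ⟨⟨p0, hp0⟩⟩
  -- separation of a point of K from the K-points at distance ≥ r
  have sep : ∀ (z : K) (r : ℝ), 0 < r → ∃ V : Set X, IsOpen V ∧ (z : X) ∈ V ∧
      ∀ w : K, (w : X) ∈ closure V → dist w z < r := by
    intro z r hr
    have hLc : IsClosed {w : K | r ≤ dist w z} :=
      isClosed_le continuous_const (continuous_id.dist continuous_const)
    have hLcpt : IsCompact (Subtype.val '' {w : K | r ≤ dist w z}) :=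
      (hLc.isCompact).image continuous_subtype_val
    have hzL : (z : X) ∉ Subtype.val '' {w : K | r ≤ dist w z} := by
      rintro ⟨w, hw, hwz⟩
      have hwz' : w = z := Subtype.val_injective hwz
      rw [hwz'] at hw
      simp only [mem_setOf_eq, dist_self] at hw
      linarith
    obtain ⟨U, V, hUo, hVo, hzU, hLV, hUV⟩ :=
      normal_separation isClosed_singleton hLcpt.isClosed
        (disjoint_singleton_left.mpr hzL)
    refine ⟨U, hUo, singleton_subset_iff.mp hzU, ?_⟩
    intro w hw
    by_contra hge
    push_neg at hge
    have hwV : (w : X) ∈ V := hLV ⟨w, hge, rfl⟩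
    have hUc : closure U ⊆ Vᶜ := closure_minimal hUV.subset_compl_right hVo.isClosed_compl
    exact hUc hw hwV
  -- one step of the cover construction
  have step : ∀ (r : ℝ), 0 < r → ∀ W' : Set (Set X), (∀ V ∈ W', IsOpen V) → K ⊆ ⋃₀ W' →
      ∃ W : Set (Set X), (W.Finite ∧ (∀ V ∈ W, IsOpen V) ∧ K ⊆ ⋃₀ W ∧
        ∀ V ∈ W, ∃ z : K, (z : X) ∈ V ∧ ∀ w : K, (w : X) ∈ closure V → dist w z < r) ∧
        ∀ V ∈ W, ∃ V' ∈ W', closure V ⊆ V' := by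
    intro r hr W' hW'o hW'c
    have hV : ∀ z : K, ∃ V : Set X, (IsOpen V ∧ (z : X) ∈ V ∧
        (∀ w : K, (w : X) ∈ closure V → dist w z < r)) ∧ ∃ V' ∈ W', closure V ⊆ V' := by
      intro z
      obtain ⟨V', hV'W, hzV'⟩ := mem_sUnion.mp (hW'c z.2)
      obtain ⟨O, hOo, hzO, hOV'⟩ := normal_exists_closure_subset isClosed_singleton
        (hW'o V' hV'W) (singleton_subset_iff.mpr hzV')
      obtain ⟨Vs, hVso, hzVs, hVs⟩ := sep z r hr
      refine ⟨O ∩ Vs, ⟨hOo.inter hVso, ⟨singleton_subset_iff.mp hzO, hzVs⟩, ?_⟩,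
        ⟨V', hV'W, (closure_mono inter_subset_left).trans hOV'⟩⟩
      intro w hw
      exact hVs w (closure_mono inter_subset_right hw)
    choose V hVp hVref using hV
    obtain ⟨t, ht⟩ := hKcpt.elim_finite_subcover V (fun z => (hVp z).1)
      (fun x hx => mem_iUnion.mpr ⟨⟨x, hx⟩, (hVp ⟨x, hx⟩).2.1⟩)
    refine ⟨V '' ↑t, ⟨t.finite_toSet.image V, ?_, ?_, ?_⟩, ?_⟩
    · rintro V₁ ⟨z, -, rfl⟩; exact (hVp z).1
    · intro x hx
      rcases mem_iUnion₂.mp (ht hx) with ⟨z, hz, hxz⟩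
      exact ⟨V z, ⟨z, hz, rfl⟩, hxz⟩
    · rintro V₁ ⟨z, -, rfl⟩; exact ⟨z, (hVp z).2.1, (hVp z).2.2⟩
    · rintro V₁ ⟨z, -, rfl⟩; exact hVref z
  -- the chain of covers
  obtain ⟨𝒲, h𝒲⟩ : ∃ 𝒲 : ℕ → Set (Set X),
      ∀ n, ((𝒲 n).Finite ∧ (∀ V ∈ 𝒲 n, IsOpen V) ∧ K ⊆ ⋃₀ 𝒲 n ∧
        (∀ V ∈ 𝒲 n, ∃ z : K, (z : X) ∈ V ∧
          ∀ w : K, (w : X) ∈ closure V → dist w z < 1/(n+1)))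
        ∧ (∀ V ∈ 𝒲 (n+1), ∃ V' ∈ 𝒲 n, closure V ⊆ V') := by
    have posr : ∀ n : ℕ, (0:ℝ) < 1/(n+1) := fun n => by positivity
    have step' : ∀ (n : ℕ) (W' : {W : Set (Set X) // (∀ V ∈ W, IsOpen V) ∧ K ⊆ ⋃₀ W}),
        ∃ W : {W : Set (Set X) // (∀ V ∈ W, IsOpen V) ∧ K ⊆ ⋃₀ W},
          (W.1.Finite ∧ (∀ V ∈ W.1, ∃ z : K, (z : X) ∈ V ∧
            ∀ w : K, (w : X) ∈ closure V → dist w z < 1/(n+1)))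
          ∧ (∀ V ∈ W.1, ∃ V' ∈ W'.1, closure V ⊆ V') := by
      intro n W'
      obtain ⟨W, ⟨h1, h2, h3, h4⟩, h5⟩ := step (1/(n+1)) (posr n) W'.1 W'.2.1 W'.2.2
      exact ⟨⟨W, h2, h3⟩, ⟨h1, h4⟩, h5⟩
    choose g hg using step'
    have base : {W : Set (Set X) // (∀ V ∈ W, IsOpen V) ∧ K ⊆ ⋃₀ W} :=
      ⟨{univ}, by rintro V rfl; exact isOpen_univ, by simp⟩
    let f : ℕ → {W : Set (Set X) // (∀ V ∈ W, IsOpen V) ∧ K ⊆ ⋃₀ W} :=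
      fun n => Nat.rec (g 0 base) (fun k p => g (k+1) p) n
    refine ⟨fun n => (f n).1, fun n => ?_⟩
    have hf : ∀ m, (f m).1.Finite ∧ (∀ V ∈ (f m).1, ∃ z : K, (z : X) ∈ V ∧
        ∀ w : K, (w : X) ∈ closure V → dist w z < 1/(m+1)) := by
      intro m
      cases m with
      | zero => exact (hg 0 base).1
      | succ k => exact (hg (k+1) (f k)).1
    refine ⟨⟨(hf n).1, (f n).2.1, (f n).2.2, (hf n).2⟩, ?_⟩
    exact (hg (n+1) (f n)).2
  have hfin : ∀ n, (𝒲 n).Finite := fun n => (h𝒲 n).1.1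
  have hopen : ∀ n, ∀ V ∈ 𝒲 n, IsOpen V := fun n => (h𝒲 n).1.2.1
  have hcov : ∀ n, K ⊆ ⋃₀ 𝒲 n := fun n => (h𝒲 n).1.2.2.1
  have hsmall : ∀ n, ∀ V ∈ 𝒲 n, ∃ z : K, (z : X) ∈ V ∧
      ∀ w : K, (w : X) ∈ closure V → dist w z < 1/(n+1) := fun n => (h𝒲 n).1.2.2.2
  have href : ∀ n, ∀ V ∈ 𝒲 (n+1), ∃ V' ∈ 𝒲 n, closure V ⊆ V' := fun n => (h𝒲 n).2
  -- co-countably many points of C are inside every cover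
  have hE : (⋃ n, ((A \ K) \ ⋃₀ 𝒲 n)).Countable :=
    countable_iUnion fun n => countable_outside (A \ K) diff_subset
      (isOpen_sUnion (hopen n)) (hcov n)
  set E : Set X := ⋃ n, ((A \ K) \ ⋃₀ 𝒲 n) with hEdef
  set C' : Set X := (A \ K) \ E with hC'def
  have hC'u : ¬ C'.Countable := fun h => hCu ((h.union hE).mono (subset_diff_union _ _))
  have hC'G : ∀ c ∈ C', ∀ n, c ∈ ⋃₀ 𝒲 n := by
    intro c hc n
    by_contra hcn
    exact hc.2 (mem_iUnion.mpr ⟨n, hc.1, hcn⟩)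
  -- descending through the covers
  have descend : ∀ (n m : ℕ), n ≤ m → ∀ V ∈ 𝒲 m,
      ∃ V' ∈ 𝒲 n, V ⊆ V' ∧ closure V ⊆ closure V' := by
    intro n m hnm
    induction m, hnm using Nat.le_induction with
    | base => exact fun V hV => ⟨V, hV, subset_rfl, subset_rfl⟩
    | succ m hm ih =>
      intro V hV
      obtain ⟨V₁, hV₁, hcl⟩ := href m V hV
      obtain ⟨V', hV', hsub, hcl'⟩ := ih V₁ hV₁
      exact ⟨V', hV', (subset_closure.trans hcl).trans hsub,
        (hcl.trans subset_closure).trans hcl'⟩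
  -- the shadow map
  have hπ : ∀ c : X, ∃ p : K, c ∈ C' → ∀ n : ℕ, ∃ V ∈ 𝒲 n, c ∈ V ∧
      ∃ w : K, (w : X) ∈ closure V ∧ dist w p < 1/(n+1) := by
    intro c
    by_cases hc : c ∈ C'
    · have hGn : ∀ n, ∃ V ∈ 𝒲 n, c ∈ V := fun n => mem_sUnion.mp (hC'G c hc n)
      choose Vc hVc hcVc using hGn
      have hz : ∀ n, ∃ z : K, (z:X) ∈ Vc n ∧
          ∀ w : K, (w : X) ∈ closure (Vc n) → dist w z < 1/(n+1) :=
        fun n => hsmall n (Vc n) (hVc n)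
      choose z hzV hzs using hz
      obtain ⟨p, -, φ, hφ, htend⟩ := isCompact_univ.tendsto_subseq
        (x := z) (fun n => mem_univ _)
      refine ⟨p, fun _ n => ?_⟩
      have hε : (0:ℝ) < 1/(n+1) := by positivity
      obtain ⟨j0, hj0⟩ := Metric.tendsto_atTop.mp htend (1/(n+1)) hε
      have hmn : n ≤ φ (max n j0) := le_trans (le_max_left _ _) (hφ.le_apply)
      obtain ⟨V', hV', hsub, hclsub⟩ := descend n (φ (max n j0)) hmn _ (hVc _)
      refine ⟨V', hV', hsub (hcVc _), z (φ (max n j0)),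
        hclsub (subset_closure (hzV _)), ?_⟩
      exact hj0 (max n j0) (le_max_right _ _)
    · exact ⟨Classical.arbitrary K, fun h => absurd h hc⟩
  choose π hπs using hπ
  -- localization
  have loc : ∀ F : Set K, IsClosed F → ∀ p : K,
      (p : X) ∈ closure {c | c ∈ C' ∧ π c ∈ F} → p ∈ F := by
    intro F hF p hp
    have keyn : ∀ n : ℕ, ∃ u ∈ F, dist p u < 3/(n+1) := by
      intro n
      set Wq : Set (Set X) :=
        {V ∈ 𝒲 n | ∃ w : K, (w:X) ∈ closure V ∧ ∃ u ∈ F, dist w u < 1/(n+1)} with hWq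
      have hsub : {c | c ∈ C' ∧ π c ∈ F} ⊆ ⋃₀ Wq := by
        rintro c ⟨hcC, hcF⟩
        obtain ⟨V, hV, hcV, w, hwcl, hwd⟩ := hπs c hcC n
        exact ⟨V, ⟨hV, w, hwcl, π c, hcF, hwd⟩, hcV⟩
      have hWqfin : Wq.Finite := (hfin n).subset (sep_subset _ _)
      have hcl : (p : X) ∈ ⋃ V ∈ Wq, closure V := by
        have h1 := closure_mono hsub hp
        rwa [hWqfin.closure_sUnion] at h1
      obtain ⟨V, hVW, hpV⟩ := mem_iUnion₂.mp hcl
      obtain ⟨hVn, w, hwcl, u, huF, hwu⟩ := hVW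
      obtain ⟨zc, hzcV, hzs⟩ := hsmall n V hVn
      have h1 : dist p zc < 1/(n+1) := hzs p hpV
      have h2 : dist w zc < 1/(n+1) := hzs w hwcl
      refine ⟨u, huF, ?_⟩
      have h3 : dist p u ≤ dist p zc + dist zc w + dist w u := dist_triangle4 _ _ _ _
      rw [dist_comm zc w] at h3
      have : (3:ℝ)/(n+1) = 1/(n+1) + 1/(n+1) + 1/(n+1) := by ring
      linarith
    have hpcl : p ∈ closure F := by
      rw [Metric.mem_closure_iff]
      intro ε hε
      obtain ⟨n, hn⟩ := exists_nat_gt (3/ε)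
      have hn1 : (3:ℝ)/ε < n+1 := hn.trans (by linarith)
      have h3 : (3:ℝ) < ε * (n+1) := by
        rw [div_lt_iff₀ hε] at hn1
        linarith
      have hlt : (3:ℝ)/(n+1) < ε := by
        rw [div_lt_iff₀ (by positivity : (0:ℝ) < (n:ℝ)+1)]
        linarith
      obtain ⟨u, huF, hu⟩ := keyn n
      exact ⟨u, huF, hu.trans hlt⟩
    rwa [hF.closure_eq] at hpcl
  -- apply the small diagonal
  set S : Set (X × X) := (fun c => (c, (π c : X))) '' C' with hSdef
  have hSu : ¬ S.Countable := by
    intro h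
    apply hC'u
    have himg : Prod.fst '' S = C' := by
      rw [hSdef, image_image]
      simp
    exact himg ▸ h.image Prod.fst
  have hSd : ∀ q ∈ S, q.1 ≠ q.2 := by
    rintro q ⟨c, hc, rfl⟩
    intro h
    have h' : c = (π c : X) := h
    exact hc.1.2 (by rw [h']; exact (π c).2)
  obtain ⟨T, hTS, hTu, hTd⟩ := hX S hSu hSd
  set Γ : Set X := {c | c ∈ C' ∧ (c, (π c : X)) ∈ T} with hΓdef
  have hTΓ : T = (fun c => (c, (π c : X))) '' Γ := by
    apply Subset.antisymm
    · intro q hq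
      obtain ⟨c, hc, rfl⟩ := hTS hq
      exact ⟨c, ⟨hc, hq⟩, rfl⟩
    · rintro q ⟨c, hc, rfl⟩
      exact hc.2
  have hΓC' : Γ ⊆ C' := fun c hc => hc.1
  obtain ⟨⟨P0, Q0⟩, hpq⟩ := exists_acc (X := X × X) hTu
  have hp0K : P0 ∈ K := by
    intro U hU hpU hUA
    apply hpq (U ×ˢ univ) (hU.prod isOpen_univ) (mem_prod.mpr ⟨hpU, mem_univ _⟩)
    have hsub : U ×ˢ univ ∩ T ⊆ (fun c => (c, (π c : X))) '' {c | c ∈ Γ ∧ c ∈ U} := by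
      rintro q ⟨hq1, hqT⟩
      have hq' : q ∈ (fun c => (c, (π c : X))) '' Γ := hTΓ ▸ hqT
      obtain ⟨c, hc, rfl⟩ := hq'
      exact ⟨c, ⟨hc, hq1.1⟩, rfl⟩
    have hss : {c | c ∈ Γ ∧ c ∈ U} ⊆ U ∩ A :=
      fun c hc => ⟨hc.2, (hΓC' hc.1).1.1⟩
    exact ((hUA.mono hss).image _).mono hsub
  have hq0K : Q0 ∈ K := by
    have hq0cl : Q0 ∈ closure K := by
      rw [mem_closure_iff]
      intro V hV hqV
      have hne : (univ ×ˢ V ∩ T).Nonempty := by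
        rw [nonempty_iff_ne_empty]
        intro h
        exact hpq (univ ×ˢ V) (isOpen_univ.prod hV) (mem_prod.mpr ⟨mem_univ _, hqV⟩)
          (h ▸ countable_empty)
      obtain ⟨q, ⟨-, hq2⟩, hqT⟩ := hne
      have hq' : q ∈ (fun c => (c, (π c : X))) '' Γ := hTΓ ▸ hqT
      obtain ⟨c, -, rfl⟩ := hq'
      exact ⟨(π c : X), hq2, (π c).2⟩
    rwa [hKcl.closure_eq] at hq0cl
  set P : K := ⟨P0, hp0K⟩
  set Q : K := ⟨Q0, hq0K⟩
  have hPQ : P = Q := by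
    by_contra hne
    have hd : 0 < dist P Q := dist_pos.mpr hne
    set ε : ℝ := dist P Q / 5 with hεdef
    have hε0 : 0 < ε := by positivity
    set F : Set K := {z | 2*ε ≤ dist z P} with hFdef
    have hFcl : IsClosed F := isClosed_le continuous_const (continuous_id.dist continuous_const)
    have hpU₀ : P0 ∈ (closure {c | c ∈ C' ∧ π c ∈ F})ᶜ := by
      intro hmem
      have hPF := loc F hFcl P hmem
      rw [hFdef] at hPF
      simp only [mem_setOf_eq, dist_self] at hPF
      linarith
    obtain ⟨V₀, hV₀o, hqV₀, hV₀⟩ := sep Q ε hε0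
    apply hpq ((closure {c | c ∈ C' ∧ π c ∈ F})ᶜ ×ˢ V₀)
      ((isClosed_closure.isOpen_compl).prod hV₀o) (mem_prod.mpr ⟨hpU₀, hqV₀⟩)
    have hempty : (closure {c | c ∈ C' ∧ π c ∈ F})ᶜ ×ˢ V₀ ∩ T = ∅ := by
      rw [eq_empty_iff_forall_notMem]
      rintro q ⟨hq1, hqT⟩
      have hq' : q ∈ (fun c => (c, (π c : X))) '' Γ := hTΓ ▸ hqT
      obtain ⟨c, hcΓ, rfl⟩ := hq'
      by_cases hcF : π c ∈ F
      · exact hq1.1 (subset_closure ⟨hΓC' hcΓ, hcF⟩)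
      · have h1 : dist (π c) P < 2*ε := by
          by_contra hge
          push_neg at hge
          exact hcF hge
        have h2 : dist (π c) Q < ε := hV₀ (π c) (subset_closure hq1.2)
        have h4 : dist P Q ≤ dist P (π c) + dist (π c) Q := dist_triangle _ _ _
        rw [dist_comm P (π c)] at h4
        have h5 : dist P Q = 5*ε := by rw [hεdef]; ring
        linarith
    rw [hempty]
    exact countable_empty
  have hpqeq : P0 = Q0 := congrArg Subtype.val hPQ
  have hclT : ((P0, Q0) : X × X) ∈ closure T := by
    rw [mem_closure_iff]
    intro o ho hmem
    rw [nonempty_iff_ne_empty]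
    intro h
    exact hpq o ho hmem (h ▸ countable_empty)
  exact hTd (P0, Q0) hclT hpqeq

end Aux

theorem cocountable_subset_with_metrizable_closure {X : Type*} [TopologicalSpace X]
    [CompactSpace X] [T2Space X] (hX : HasSmallDiagonal X)
    (A : Set X) (hA : ¬ A.Countable)
    (hK : TopologicalSpace.MetrizableSpace
      {x : X // ∀ U : Set X, IsOpen U → x ∈ U → ¬ (U ∩ A).Countable}) :
    ∃ B ⊆ A, (A \ B).Countable ∧
      TopologicalSpace.MetrizableSpace (closure B) := by
  classical
  have hK' : TopologicalSpace.MetrizableSpace (condSet A) := hK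
  refine ⟨A ∩ condSet A, inter_subset_left, ?_, ?_⟩
  · have heq : A \ (A ∩ condSet A) = A \ condSet A := diff_self_inter
    rw [heq]
    exact key hX A hA hK'
  · haveI := hK'
    have hsub : closure (A ∩ condSet A) ⊆ condSet A :=
      closure_minimal inter_subset_right (isClosed_condSet A)
    exact (Topology.IsEmbedding.inclusion hsub).metrizableSpace
end

section
/- Let X be a compact Hausdorff space, let x ∈ X, and let F be a countable family of closed G_δ subsets of X that is a local π-net at x. Then x has a countable local π-base in X. -/
open Set

lemma closed_Gdelta_nhds_basis {X : Type*} [TopologicalSpace X]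
    [CompactSpace X] [T2Space X] {s : Set X} (hsc : IsClosed s) (hsg : IsGδ s) :
    ∃ V : ℕ → Set X, (∀ n, IsOpen (V n) ∧ s ⊆ V n) ∧
      ∀ U : Set X, IsOpen U → s ⊆ U → ∃ n, V n ⊆ U := by
  obtain ⟨W, hWopen, hWeq⟩ := hsg.eq_iInter_nat
  have hsW : ∀ n, s ⊆ W n := fun n => by rw [hWeq]; exact iInter_subset _ n
  choose V hVopen hsV hclV using fun n =>
    normal_exists_closure_subset hsc (hWopen n) (hsW n)
  refine ⟨fun n => ⋂ k ≤ n, V k, fun n => ⟨?_, ?_⟩, ?_⟩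
  · exact (finite_Iic n).isOpen_biInter fun k _ => hVopen k
  · exact subset_iInter fun k => subset_iInter fun _ => hsV k
  · intro U hU hsU
    have hK : IsCompact Uᶜ := (hU.isClosed_compl).isCompact
    have hcover : Uᶜ ⊆ ⋃ n, (closure (V n))ᶜ := by
      intro y hy
      simp only [mem_iUnion, mem_compl_iff]
      by_contra h
      push_neg at h
      have : y ∈ s := by
        rw [hWeq]
        exact mem_iInter.2 fun n => hclV n (h n)
      exact hy (hsU this)
    obtain ⟨t, ht⟩ := hK.elim_finite_subcover _
      (fun n => (isClosed_closure (s := V n)).isOpen_compl) hcover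
    rcases t.eq_empty_or_nonempty with rfl | htne
    · simp only [Finset.notMem_empty, iUnion_of_empty, iUnion_empty,
        subset_empty_iff, compl_empty_iff] at ht
      exact ⟨0, by rw [ht]; exact subset_univ _⟩
    · obtain ⟨N, hN⟩ := t.exists_max_image id htne
      refine ⟨N, fun y hy => ?_⟩
      by_contra hyU
      obtain ⟨k, hkt, hk⟩ : ∃ k ∈ t, y ∈ (closure (V k))ᶜ := by
        have := ht hyU
        simpa using this
      have hkN : k ≤ N := hN.2 k hkt
      exact hk (subset_closure (mem_iInter.1 (mem_iInter.1 hy k) hkN))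

theorem countable_local_pi_base_of_Gdelta_pi_net {X : Type*} [TopologicalSpace X]
    [CompactSpace X] [T2Space X] (x : X) (F : Set (Set X))
    (hcount : F.Countable)
    (hF : ∀ s ∈ F, IsClosed s ∧ IsGδ s ∧ s.Nonempty)
    (hnet : ∀ U : Set X, IsOpen U → x ∈ U → ∃ s ∈ F, s ⊆ U) :
    ∃ B : Set (Set X), B.Countable ∧ (∀ b ∈ B, IsOpen b ∧ b.Nonempty) ∧
      ∀ U : Set X, IsOpen U → x ∈ U → ∃ b ∈ B, b ⊆ U := by
  choose V hV hVbase using fun (s : F) =>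
    closed_Gdelta_nhds_basis (hF s s.2).1 (hF s s.2).2.1
  haveI := hcount.to_subtype
  refine ⟨⋃ s : F, range (V s), countable_iUnion (fun s => countable_range _), ?_, ?_⟩
  · rintro b hb
    simp only [mem_iUnion, mem_range] at hb
    obtain ⟨s, n, rfl⟩ := hb
    exact ⟨(hV s n).1, ((hF s s.2).2.2).mono (hV s n).2⟩
  · intro U hU hxU
    obtain ⟨s, hsF, hsU⟩ := hnet U hU hxU
    obtain ⟨n, hn⟩ := hVbase ⟨s, hsF⟩ U hU hsU
    exact ⟨V ⟨s, hsF⟩ n, mem_iUnion.2 ⟨⟨s, hsF⟩, mem_range_self n⟩, hn⟩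
end

section
/- The Continuum Hypothesis implies that there exists a Luzin set of reals of cardinality ω₁. -/
open Set Cardinal

namespace LuzinAux

/-- Injection witnessing that there are at most continuum many closed subsets of `ℝ`. -/
lemma mk_closeds_le_continuum : #{s : Set ℝ // IsClosed s} ≤ Cardinal.continuum := by
  have h : Function.Injective
      (fun s : {s : Set ℝ // IsClosed s} =>
        ({pq : ℚ × ℚ | Set.Ioo (pq.1 : ℝ) (pq.2 : ℝ) ⊆ (s.1)ᶜ} : Set (ℚ × ℚ))) := by
    intro s t hst
    have key : ∀ u : {s : Set ℝ // IsClosed s},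
        (u.1)ᶜ = ⋃ pq ∈ {pq : ℚ × ℚ | Set.Ioo (pq.1 : ℝ) (pq.2 : ℝ) ⊆ (u.1)ᶜ},
          Set.Ioo (pq.1 : ℝ) (pq.2 : ℝ) := by
      intro u
      apply Subset.antisymm
      · intro x hx
        have hopen : IsOpen (u.1)ᶜ := u.2.isOpen_compl
        rcases Metric.isOpen_iff.1 hopen x hx with ⟨ε, hε, hball⟩
        obtain ⟨p, hp1, hp2⟩ := exists_rat_btwn (by linarith : x - ε < x)
        obtain ⟨q, hq1, hq2⟩ := exists_rat_btwn (by linarith : x < x + ε)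
        have hsub : Set.Ioo ((p : ℝ)) ((q : ℝ)) ⊆ (u.1)ᶜ := by
          intro y hy
          apply hball
          rw [Metric.mem_ball, Real.dist_eq, abs_lt]
          constructor <;> [nlinarith [hy.1, hy.2]; nlinarith [hy.1, hy.2]]
        exact Set.mem_biUnion (show (p, q) ∈ _ from hsub) ⟨hp2, hq1⟩
      · intro x hx
        simp only [mem_iUnion] at hx
        obtain ⟨pq, hpq, hxpq⟩ := hx
        exact hpq hxpq
    have : (s.1)ᶜ = (t.1)ᶜ := by
      rw [key s, key t]
      exact congrArg (fun A : Set (ℚ × ℚ) => ⋃ pq ∈ A, Set.Ioo ((pq.1 : ℝ)) ((pq.2 : ℝ))) hst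
    exact Subtype.ext (compl_injective this)
  calc #{s : Set ℝ // IsClosed s} ≤ #(Set (ℚ × ℚ)) := Cardinal.mk_le_of_injective h
    _ = 2 ^ #(ℚ × ℚ) := Cardinal.mk_set
    _ = 2 ^ Cardinal.aleph0 := by rw [Cardinal.mk_denumerable]
    _ = Cardinal.continuum := Cardinal.two_power_aleph0

/-- Singletons in ℝ are nowhere dense. -/
lemma isNowhereDense_singleton (x : ℝ) : IsNowhereDense ({x} : Set ℝ) := by
  rw [IsNowhereDense, closure_singleton, interior_singleton]

abbrev OT : Type := (Cardinal.aleph 1).ord.ToType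

noncomputable instance : LinearOrder OT := linearOrder_toType _
instance : WellFoundedLT OT := wellFoundedLT_toType _
instance : IsWellOrder OT (· < ·) := isWellOrder_lt

lemma countable_Iio (α : OT) : (Set.Iio α).Countable := by
  rw [Cardinal.countable_iff_lt_aleph_one]
  have h1 : #(Set.Iio α) = (Ordinal.typein (α := OT) (· < ·) α).card := by
    rw [Ordinal.card_typein]
    exact Cardinal.mk_congr (Equiv.subtypeEquivRight fun x => Set.mem_Iio)
  rw [h1, ← Cardinal.lt_ord]
  exact Ordinal.typein_lt_self α

lemma countable_Iic (α : OT) : (Set.Iic α).Countable := by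
  have : Set.Iic α = Set.Iio α ∪ {α} := by
    ext β; simp [le_iff_lt_or_eq]
  rw [this]
  exact (countable_Iio α).union (countable_singleton α)

lemma mk_OT : #OT = Cardinal.aleph 1 := by
  rw [OT, Cardinal.mk_toType, Cardinal.card_ord]

/-- The transfinite sequence of points for the Luzin set. -/
noncomputable def luzinSeq (F : OT → Set ℝ) : OT → ℝ :=
  WellFounded.fix wellFounded_lt fun α ih =>
    Classical.epsilon fun x => ∀ β (h : β < α), x ∉ F β ∧ x ≠ ih β h

lemma luzinSeq_eq (F : OT → Set ℝ) (α : OT) :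
    luzinSeq F α =
      Classical.epsilon fun x => ∀ β (_ : β < α), x ∉ F β ∧ x ≠ luzinSeq F β := by
  rw [luzinSeq, WellFounded.fix_eq]

lemma luzinSeq_spec (F : OT → Set ℝ) (hF : ∀ i, IsNowhereDense (F i)) (α : OT) :
    ∀ β, β < α → luzinSeq F α ∉ F β ∧ luzinSeq F α ≠ luzinSeq F β := by
  have hex : ∃ x : ℝ, ∀ β (_ : β < α), x ∉ F β ∧ x ≠ luzinSeq F β := by
    set B : Set ℝ := (⋃ β ∈ Set.Iio α, F β) ∪ (⋃ β ∈ Set.Iio α, {luzinSeq F β}) with hB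
    have hmeagre : IsMeagre B := by
      rw [isMeagre_iff_countable_union_isNowhereDense]
      refine ⟨(F '' Set.Iio α) ∪ ((fun β => ({luzinSeq F β} : Set ℝ)) '' Set.Iio α), ?_, ?_, ?_⟩
      · rintro t (⟨β, _, rfl⟩ | ⟨β, _, rfl⟩)
        · exact hF β
        · exact isNowhereDense_singleton _
      · exact ((countable_Iio α).image F).union ((countable_Iio α).image _)
      · rintro x (hx | hx) <;> simp only [mem_iUnion] at hx <;>
          obtain ⟨β, hβ, hxβ⟩ := hx
        · exact ⟨F β, Or.inl ⟨β, hβ, rfl⟩, hxβ⟩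
        · exact ⟨{luzinSeq F β}, Or.inr ⟨β, hβ, rfl⟩, hxβ⟩
    have hdense : Dense Bᶜ := dense_of_mem_residual hmeagre
    obtain ⟨x, hx⟩ := hdense.nonempty
    refine ⟨x, fun β hβ => ?_⟩
    rw [mem_compl_iff, hB, mem_union, not_or] at hx
    constructor
    · intro hxF
      exact hx.1 (Set.mem_biUnion hβ hxF)
    · intro hxe
      exact hx.2 (Set.mem_biUnion hβ (by rw [hxe]; rfl))
  have := Classical.epsilon_spec hex
  intro β hβ
  rw [luzinSeq_eq]
  exact this β hβ

end LuzinAux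

/-- CH implies there is a Luzin set of reals of cardinality ω₁. -/
theorem exists_luzin_of_CH (hCH : Cardinal.continuum = Cardinal.aleph 1) :
    ∃ L : Set ℝ, #L = Cardinal.aleph 1 ∧ ¬ L.Countable ∧
      ∀ N : Set ℝ, IsNowhereDense N → (L ∩ N).Countable := by
  classical
  open LuzinAux in
  have hCH0 : Cardinal.continuum.{0} = Cardinal.aleph.{0} 1 := by
    apply Cardinal.lift_injective
    rw [Cardinal.lift_continuum, Cardinal.lift_aleph, Ordinal.lift_one]
    exact hCH
  -- the type of closed nowhere dense subsets of ℝ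
  set T := {s : Set ℝ // IsClosed s ∧ IsNowhereDense s} with hT
  have hTne : Nonempty T := ⟨⟨∅, isClosed_empty, isNowhereDense_empty⟩⟩
  have hTle : #T ≤ #OT := by
    rw [mk_OT, ← hCH0]
    refine le_trans ?_ mk_closeds_le_continuum
    exact Cardinal.mk_le_of_injective (f := fun t : T => (⟨t.1, t.2.1⟩ : {s : Set ℝ // IsClosed s}))
      (fun a b hab => by
        simp only [Subtype.mk.injEq] at hab
        exact Subtype.ext hab)
  obtain ⟨f⟩ := Cardinal.le_def _ _ |>.1 hTle
  have hfsurj : Function.Surjective (Function.invFun f) := Function.invFun_surjective f.injective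
  set F : OT → Set ℝ := fun i => (Function.invFun f i).1 with hFdef
  have hF : ∀ i, IsNowhereDense (F i) := fun i => (Function.invFun f i).2.2
  set g := luzinSeq F with hg
  have hspec := luzinSeq_spec F hF
  have hginj : Function.Injective g := by
    intro a b hab
    rcases lt_trichotomy a b with h | h | h
    · exact absurd hab.symm (hspec b a h).2
    · exact h
    · exact absurd hab (hspec a b h).2
  refine ⟨Set.range g, ?_, ?_, ?_⟩
  · rw [Cardinal.mk_range_eq _ hginj, mk_OT]
  · rw [Cardinal.countable_iff_lt_aleph_one, Cardinal.mk_range_eq _ hginj, mk_OT]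
    exact lt_irrefl _
  · intro N hN
    set t : T := ⟨closure N, isClosed_closure, hN.closure⟩ with ht
    set i := f t with hi
    have hFi : F i = closure N := by
      rw [hFdef]
      simp only [hi]
      rw [Function.leftInverse_invFun f.injective t]
    have hsub : Set.range g ∩ N ⊆ g '' Set.Iic i := by
      rintro x ⟨⟨α, rfl⟩, hxN⟩
      refine ⟨α, ?_, rfl⟩
      by_contra hαi
      rw [Set.mem_Iic, not_le] at hαi
      exact (hspec α i hαi).1 (hFi ▸ subset_closure hxN)
    exact ((countable_Iic i).image g).mono hsub
end

section
/- Let S be a countable set and let 𝒳 = {(a_α, b_α) : α < ω₁} be a family of pairs of disjoint subsets of S such that for any two distinct α, β < ω₁, the set (a_α ∩ b_β) ∪ (a_β ∩ b_α) is nonempty. Then for every uncountable A ⊆ ω₁, the family {(a_α, b_α) : α ∈ A} is not separated, i.e., there is no single set Y ⊆ S with a_α \ Y and b_α ∩ Y finite for all α ∈ A. -/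
open Set

theorem not_separated_of_crossing {S : Type*} [Countable S]
    (a b : ω₁ → Set S) (hdisj : ∀ α, Disjoint (a α) (b α))
    (hcross : ∀ α β : ω₁, α ≠ β → ((a α ∩ b β) ∪ (a β ∩ b α)).Nonempty) :
    ∀ A : Set ω₁, ¬ A.Countable →
      ¬ ∃ Y : Set S, ∀ α ∈ A, (a α \ Y).Finite ∧ (b α ∩ Y).Finite := by
  rintro A hA ⟨Y, hY⟩
  classical
  set f : A → Finset S × Finset S := fun α =>
    ((hY α α.2).1.toFinset, (hY α α.2).2.toFinset) with hf
  have hninj : ¬ Function.Injective f := by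
    intro hinj
    exact hA (Set.countable_coe_iff.mp (hinj.countable))
  rw [Function.not_injective_iff] at hninj
  obtain ⟨α, β, hfab, hne⟩ := hninj
  have hne' : (α : ω₁) ≠ (β : ω₁) := fun h => hne (Subtype.ext h)
  have ha : a α \ Y = a β \ Y := by
    have := congrArg Prod.fst hfab
    simpa [hf, Set.Finite.toFinset_inj] using this
  have hb : b α ∩ Y = b β ∩ Y := by
    have := congrArg Prod.snd hfab
    simpa [hf, Set.Finite.toFinset_inj] using this
  obtain ⟨x, hx⟩ := hcross α β hne'
  rcases hx with ⟨hxa, hxb⟩ | ⟨hxa, hxb⟩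
  · by_cases hxY : x ∈ Y
    · have : x ∈ b α ∩ Y := hb ▸ ⟨hxb, hxY⟩
      exact (hdisj α).ne_of_mem hxa this.1 rfl
    · have : x ∈ a β \ Y := ha ▸ ⟨hxa, hxY⟩
      exact (hdisj β).ne_of_mem this.1 hxb rfl
  · by_cases hxY : x ∈ Y
    · have : x ∈ b β ∩ Y := hb.symm ▸ ⟨hxb, hxY⟩
      exact (hdisj β).ne_of_mem hxa this.1 rfl
    · have : x ∈ a α \ Y := ha.symm ▸ ⟨hxa, hxY⟩
      exact (hdisj α).ne_of_mem this.1 hxb rfl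
end

section
/- If a compact Hausdorff space X has a ccc subspace of uncountable π-weight, then X has a compact ccc subspace whose π-weight is exactly ℵ₁. -/
open Set Cardinal

universe u

/-- A space is ccc if every pairwise disjoint family of nonempty open sets is
countable. -/
def CCC (X : Type u) [TopologicalSpace X] : Prop :=
  ∀ 𝒰 : Set (Set X), (∀ U ∈ 𝒰, IsOpen U ∧ U.Nonempty) →
    𝒰.PairwiseDisjoint id → 𝒰.Countable

section Helpers

variable {X : Type u} [TopologicalSpace X]

lemma isPiBase_univ : IsPiBase {U : Set X | IsOpen U ∧ U.Nonempty} :=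
  ⟨fun _ hb => hb, fun U hU hne => ⟨U, ⟨hU, hne⟩, subset_rfl⟩⟩

lemma piWeight_le_mk {B : Set (Set X)} (h : IsPiBase B) : piWeight X ≤ #B :=
  csInf_le' ⟨B, h, rfl⟩

lemma exists_piBase_mk_eq_piWeight :
    ∃ B : Set (Set X), IsPiBase B ∧ #B = piWeight X :=
  csInf_mem (s := {c : Cardinal.{u} | ∃ B : Set (Set X), IsPiBase B ∧ #B = c})
    ⟨_, ⟨_, isPiBase_univ, rfl⟩⟩

/-- No countable π-base. -/
def NoCtblPiBase (X : Type u) [TopologicalSpace X] : Prop :=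
  ∀ B : Set (Set X), IsPiBase B → ¬ B.Countable

lemma aleph0_lt_piWeight_of_noCtbl (h : NoCtblPiBase X) :
    Cardinal.aleph 0 < piWeight X := by
  rw [Cardinal.aleph_zero]
  by_contra hle
  push_neg at hle
  obtain ⟨B, hB, hBc⟩ := exists_piBase_mk_eq_piWeight (X := X)
  exact h B hB (Set.countable_coe_iff.mp (Cardinal.mk_le_aleph0_iff.mp (hBc ▸ hle)))

lemma noCtbl_of_aleph0_lt_piWeight (h : Cardinal.aleph 0 < piWeight X) :
    NoCtblPiBase X := by
  intro B hB hc
  rw [Cardinal.aleph_zero] at h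
  have h1 : #B ≤ ℵ₀ := Cardinal.mk_le_aleph0_iff.mpr (Set.countable_coe_iff.mpr hc)
  have := (piWeight_le_mk hB).trans h1
  exact absurd this (not_le.mpr h)

lemma piWeight_eq_aleph_one (h1 : NoCtblPiBase X)
    (h2 : piWeight X ≤ Cardinal.aleph 1) : piWeight X = Cardinal.aleph 1 := by
  refine le_antisymm h2 ?_
  have h0 := aleph0_lt_piWeight_of_noCtbl h1
  rw [Cardinal.aleph_zero] at h0
  have : Cardinal.aleph 1 = Order.succ (Cardinal.aleph 0) := by
    rw [← Cardinal.aleph_succ]; norm_num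
  rw [this, Order.succ_le_iff, Cardinal.aleph_zero]
  exact h0

lemma CCC.of_map {A B : Type u} [TopologicalSpace A] [TopologicalSpace B] (f : A → B)
    (hf : Continuous f) (h1 : ∀ U : Set B, IsOpen U → U.Nonempty → (f ⁻¹' U).Nonempty)
    (hA : CCC A) : CCC B := by
  intro 𝒰 hop hdisj
  have hV : ((f ⁻¹' ·) '' 𝒰).Countable := by
    refine hA _ ?_ ?_
    · rintro V ⟨U, hU, rfl⟩
      exact ⟨(hop U hU).1.preimage hf, h1 U (hop U hU).1 (hop U hU).2⟩
    · rintro V₁ ⟨U₁, hU₁, rfl⟩ V₂ ⟨U₂, hU₂, rfl⟩ hne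
      have : U₁ ≠ U₂ := fun h => hne (by rw [h])
      exact (hdisj hU₁ hU₂ this).preimage f
  refine Set.countable_of_injective_of_countable_image ?_ hV
  intro U₁ hU₁ U₂ hU₂ heq
  by_contra hne
  have hd := hdisj hU₁ hU₂ hne
  have h1' := h1 U₁ (hop U₁ hU₁).1 (hop U₁ hU₁).2
  obtain ⟨x, hx⟩ := h1'
  have hx2 : x ∈ f ⁻¹' U₂ := by rw [show f ⁻¹' U₂ = f ⁻¹' U₁ from heq.symm]; exact hx
  exact absurd (hd.preimage f) (fun hd' => (hd'.ne_of_mem hx hx2) rfl)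

end Helpers

section Construction

variable {X : Type u} [TopologicalSpace X]

/-- Finite rational cylinders over a family of continuous functions. -/
def cylFam (S : Set C(X, ℝ)) : Set (Set X) :=
  {A | ∃ t : Finset (C(X, ℝ) × ℚ × ℚ), (∀ p ∈ t, p.1 ∈ S) ∧
    A = ⋂ p ∈ t, ⇑p.1 ⁻¹' Ioo (p.2.1 : ℝ) (p.2.2 : ℝ)}

lemma cylFam_isOpen {S : Set C(X, ℝ)} {A : Set X} (hA : A ∈ cylFam S) : IsOpen A := by
  obtain ⟨t, -, rfl⟩ := hA
  exact isOpen_biInter_finset fun p _ => isOpen_Ioo.preimage p.1.continuous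

lemma cylFam_countable {S : Set C(X, ℝ)} (hS : S.Countable) : (cylFam S).Countable := by
  have h1 : {t : Finset (C(X, ℝ) × ℚ × ℚ) | ∀ p ∈ t, p.1 ∈ S}.Countable := by
    have h2 : {u : Set (C(X, ℝ) × ℚ × ℚ) | u.Finite ∧ u ⊆ S ×ˢ (univ : Set (ℚ × ℚ))}.Countable :=
      Set.countable_setOf_finite_subset (hS.prod countable_univ)
    have h3 := h2.preimage (f := fun t : Finset (C(X, ℝ) × ℚ × ℚ) => (↑t : Set _))
      Finset.coe_injective
    refine h3.mono ?_
    intro t ht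
    constructor
    · exact t.finite_toSet
    · intro p hp
      exact ⟨ht p hp, mem_univ _⟩
  have : cylFam S ⊆ (fun t : Finset (C(X, ℝ) × ℚ × ℚ) =>
      ⋂ p ∈ t, ⇑p.1 ⁻¹' Ioo (p.2.1 : ℝ) (p.2.2 : ℝ)) '' {t | ∀ p ∈ t, p.1 ∈ S} := by
    rintro A ⟨t, ht, rfl⟩
    exact ⟨t, ht, rfl⟩
  exact (h1.image _).mono this

variable [CompactSpace X] [T2Space X]

/-- The property we require of the next function in the transfinite recursion. -/
def Spec (K : Set X) (S : Set C(X, ℝ)) (g : C(X, ℝ)) : Prop :=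
  (∃ x ∈ K, g x = 1) ∧
  ∀ A ∈ cylFam S, A ∩ K ⊆ {y | 0 < g y} → A ∩ K = ∅

lemma exists_spec {K : Set X} (hK : IsClosed K) (hbig : NoCtblPiBase ↥K)
    {S : Set C(X, ℝ)} (hS : S.Countable) : ∃ g, Spec K S g := by
  -- find a relatively open set not containing any nonempty trace of a cylinder
  have hV : ∃ V : Set X, IsOpen V ∧ (V ∩ K).Nonempty ∧
      ∀ A ∈ cylFam S, (A ∩ K).Nonempty → ¬ A ∩ K ⊆ V ∩ K := by
    by_contra hcon
    push_neg at hcon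
    set B : Set (Set ↥K) :=
      {b | (∃ A ∈ cylFam S, b = Subtype.val ⁻¹' A) ∧ b.Nonempty} with hBdef
    have hBpi : IsPiBase B := by
      constructor
      · rintro b ⟨⟨A, hA, rfl⟩, hne⟩
        exact ⟨(cylFam_isOpen hA).preimage continuous_subtype_val, hne⟩
      · intro U hU hUne
        obtain ⟨V, hV, rfl⟩ := isOpen_induced_iff.mp hU
        have hVK : (V ∩ K).Nonempty := by
          obtain ⟨u, hu⟩ := hUne
          exact ⟨u.1, hu, u.2⟩
        obtain ⟨A, hA, hAne, hsub⟩ := hcon V hV hVK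
        refine ⟨Subtype.val ⁻¹' A, ⟨⟨A, hA, rfl⟩, ?_⟩, ?_⟩
        · obtain ⟨x, hxA, hxK⟩ := hAne
          exact ⟨⟨x, hxK⟩, hxA⟩
        · intro x hx
          exact (hsub ⟨hx, x.2⟩).1
    have hBc : B.Countable := by
      have : B ⊆ (fun A => Subtype.val ⁻¹' A) '' cylFam S := by
        rintro b ⟨⟨A, hA, rfl⟩, -⟩
        exact ⟨A, hA, rfl⟩
      exact ((cylFam_countable hS).image _).mono this
    exact hbig B hBpi hBc
  obtain ⟨V, hVo, ⟨x, hxV, hxK⟩, hVno⟩ := hV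
  -- Urysohn
  obtain ⟨f, hf0, hf1, hf01⟩ := exists_continuous_zero_one_of_isClosed
    (hK.inter (isClosed_compl_iff.mpr hVo)) (isClosed_singleton (x := x))
    (by
      rw [Set.disjoint_singleton_right]
      rintro ⟨-, hxV'⟩
      exact hxV' hxV)
  refine ⟨f, ⟨x, hxK, hf1 rfl⟩, ?_⟩
  intro A hA hsub
  by_contra hne
  rw [← Ne, ← Set.nonempty_iff_ne_empty] at hne
  refine hVno A hA hne ?_
  intro y ⟨hyA, hyK⟩
  refine ⟨?_, hyK⟩
  by_contra hyV
  have : f y = 0 := hf0 ⟨hyK, hyV⟩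
  have h2 : 0 < f y := hsub ⟨hyA, hyK⟩
  rw [this] at h2
  exact lt_irrefl _ h2

/-- The next continuous function, given previously chosen ones. -/
noncomputable def nextg (K : Set X) (S : Set C(X, ℝ)) : C(X, ℝ) :=
  haveI : Nonempty C(X, ℝ) := ⟨ContinuousMap.const X 0⟩
  Classical.epsilon (Spec K S)

lemma nextg_spec {K : Set X} {S : Set C(X, ℝ)} (h : ∃ g, Spec K S g) :
    Spec K S (nextg K S) := by
  haveI : Nonempty C(X, ℝ) := ⟨ContinuousMap.const X 0⟩
  exact Classical.epsilon_spec h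


end Construction

/-- The index type: a well order of type `ω₁`. -/
def Idx : Type u := (Cardinal.aleph 1 : Cardinal.{u}).ord.ToType

noncomputable instance : LinearOrder Idx.{u} :=
  inferInstanceAs (LinearOrder (Cardinal.aleph 1 : Cardinal.{u}).ord.ToType)

instance : WellFoundedLT Idx.{u} :=
  inferInstanceAs (WellFoundedLT (Cardinal.aleph 1 : Cardinal.{u}).ord.ToType)

instance : IsWellOrder Idx.{u} (· < ·) := isWellOrder_lt


section Construction2

variable {X : Type u} [TopologicalSpace X] [CompactSpace X] [T2Space X]

/-- The transfinite family of continuous functions, indexed by `(aleph 1).ord.toType`. -/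
noncomputable def gfam (K : Set X) : Idx.{u} → C(X, ℝ) :=
  (wellFounded_lt (α := Idx.{u})).fix
    (fun α ih => nextg K {h | ∃ β, ∃ hβ : β < α, ih β hβ = h})

lemma gfam_eq (K : Set X) (α : Idx.{u}) :
    gfam K α = nextg K (gfam K '' Iio α) := by
  rw [gfam, WellFounded.fix_eq]
  congr 1
  ext h
  simp only [mem_image, mem_Iio, mem_setOf_eq]
  constructor
  · rintro ⟨β, hβ, rfl⟩; exact ⟨β, hβ, rfl⟩
  · rintro ⟨β, hβ, rfl⟩; exact ⟨β, hβ, rfl⟩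

lemma prevs_countable (K : Set X) (α : Idx.{u}) :
    (gfam K '' Iio α).Countable := by
  have h1 : (Iio α).Countable := by
    rw [← Set.countable_coe_iff]
    rw [Set.countable_coe_iff, Cardinal.countable_iff_lt_aleph_one]
    exact Cardinal.mk_Iio_ord_toType α
  exact h1.image _

lemma gfam_spec {K : Set X} (hK : IsClosed K) (hbig : NoCtblPiBase ↥K)
    (α : Idx.{u}) :
    Spec K (gfam K '' Iio α) (gfam K α) := by
  rw [gfam_eq]
  exact nextg_spec (exists_spec hK hbig (prevs_countable K α))



/-- Basic open cylinders with rational interval entries. -/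
def bas (t : Finset (Idx.{u} × ℚ × ℚ)) : Set (Idx.{u} → ℝ) :=
  ⋂ p ∈ t, (fun y => y p.1) ⁻¹' Ioo (p.2.1 : ℝ) (p.2.2 : ℝ)

lemma mem_bas {t : Finset (Idx.{u} × ℚ × ℚ)} {z : Idx.{u} → ℝ} :
    z ∈ bas t ↔ ∀ p ∈ t, z p.1 ∈ Ioo (p.2.1 : ℝ) (p.2.2 : ℝ) := by
  simp [bas]

lemma type_Idx : Ordinal.type (α := Idx.{u}) (· < ·) = (Cardinal.aleph 1 : Cardinal.{u}).ord :=
  Ordinal.type_toType _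

lemma bas_isOpen (t : Finset (Idx.{u} × ℚ × ℚ)) : IsOpen (bas t) :=
  isOpen_biInter_finset fun p _ => isOpen_Ioo.preimage (continuous_apply p.1)

lemma exists_basic {O : Set (Idx.{u} → ℝ)} (hO : IsOpen O) {y : Idx.{u} → ℝ} (hy : y ∈ O) :
    ∃ t : Finset (Idx.{u} × ℚ × ℚ), y ∈ bas t ∧ bas t ⊆ O := by
  obtain ⟨I, v, hIv, hsub⟩ := isOpen_pi_iff.mp hO y hy
  have H : ∀ i ∈ I, ∃ qq : ℚ × ℚ, y i ∈ Ioo (qq.1 : ℝ) qq.2 ∧ Ioo (qq.1 : ℝ) qq.2 ⊆ v i := by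
    intro i hi
    obtain ⟨w, hw, hyw, hwv⟩ := Real.isTopologicalBasis_Ioo_rat.exists_subset_of_mem_open
      (hIv i hi).2 (hIv i hi).1
    simp only [mem_iUnion, mem_singleton_iff] at hw
    obtain ⟨a, b, hab, rfl⟩ := hw
    exact ⟨(a, b), hyw, hwv⟩
  classical
  choose! qq hq1 hq2 using H
  refine ⟨I.image (fun i => (i, qq i)), ?_, ?_⟩
  · rw [mem_bas]
    rintro p hp
    rw [Finset.mem_image] at hp
    obtain ⟨i, hi, rfl⟩ := hp
    exact hq1 i hi
  · intro z hz
    rw [mem_bas] at hz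
    apply hsub
    intro i hi
    exact hq2 i hi (hz (i, qq i) (Finset.mem_image_of_mem _ hi))

lemma mk_basIndex : #(Finset (Idx.{u} × ℚ × ℚ)) = (Cardinal.aleph 1 : Cardinal.{u}) := by
  have hι : #Idx.{u} = Cardinal.aleph 1 := Cardinal.mk_ord_toType _
  haveI : Infinite Idx.{u} := by
    rw [Cardinal.infinite_iff, hι]; exact Cardinal.aleph0_lt_aleph_one.le
  rw [Cardinal.mk_finset_of_infinite]
  have h2 : #(ℚ × ℚ) = ℵ₀ := Cardinal.mk_denumerable _
  rw [Cardinal.mk_prod, hι, h2, Cardinal.lift_aleph0]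
  rw [Cardinal.lift_id']
  exact Cardinal.mul_eq_left (Cardinal.aleph0_le_aleph 1) Cardinal.aleph0_lt_aleph_one.le
    Cardinal.aleph0_ne_zero

/-- The diagonal product map into `ℝ^ω₁`. -/
noncomputable def pmap (K : Set X) : X → (Idx.{u} → ℝ) := fun x α => gfam K α x

lemma pmap_continuous (K : Set X) : Continuous (pmap K) :=
  continuous_pi fun α => (gfam K α).continuous

lemma T_small_piBase (K : Set X) :
    ∃ B : Set (Set ↥(pmap K '' K)), IsPiBase B ∧ #B ≤ (Cardinal.aleph 1 : Cardinal.{u}) := by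
  set T := pmap K '' K with hT
  refine ⟨{b | (∃ t, b = Subtype.val ⁻¹' bas t) ∧ b.Nonempty}, ⟨?_, ?_⟩, ?_⟩
  · rintro b ⟨⟨t, rfl⟩, hne⟩
    exact ⟨(bas_isOpen t).preimage continuous_subtype_val, hne⟩
  · intro U hU hUne
    obtain ⟨O, hO, rfl⟩ := isOpen_induced_iff.mp hU
    obtain ⟨u, hu⟩ := hUne
    obtain ⟨t, hyt, htO⟩ := exists_basic hO hu
    exact ⟨Subtype.val ⁻¹' bas t, ⟨⟨t, rfl⟩, ⟨u, hyt⟩⟩, fun z hz => htO hz⟩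
  · have hsub : {b : Set ↥T | (∃ t, b = Subtype.val ⁻¹' bas t) ∧ b.Nonempty} ⊆
        Set.range (fun t : Finset (Idx.{u} × ℚ × ℚ) => Subtype.val ⁻¹' bas t) := by
      rintro b ⟨⟨t, rfl⟩, -⟩
      exact ⟨t, rfl⟩
    refine le_trans (Cardinal.mk_le_mk_of_subset hsub) ?_
    refine le_trans Cardinal.mk_range_le ?_
    rw [mk_basIndex]

lemma T_noCtbl {K : Set X} (hK : IsClosed K) (hbig : NoCtblPiBase ↥K) :
    NoCtblPiBase ↥(pmap K '' K) := by
  classical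
  intro B₀ hpi hc
  haveI : Countable ↥B₀ := Set.countable_coe_iff.mpr hc
  -- choose a basic nonempty trace inside each member of the π-base
  have Hb : ∀ b : ↥B₀, ∃ t : Finset (Idx.{u} × ℚ × ℚ),
      (Subtype.val ⁻¹' bas t : Set ↥(pmap K '' K)).Nonempty ∧
      (Subtype.val ⁻¹' bas t : Set ↥(pmap K '' K)) ⊆ (b : Set ↥(pmap K '' K)) := by
    intro b
    obtain ⟨hbo, hbne⟩ := hpi.1 b b.2
    obtain ⟨O, hO, hOb⟩ := isOpen_induced_iff.mp hbo
    obtain ⟨u, hu⟩ := hbne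
    have huO : (u : Idx.{u} → ℝ) ∈ O := by rw [← hOb] at hu; exact hu
    obtain ⟨t, hyt, htO⟩ := exists_basic hO huO
    refine ⟨t, ⟨u, hyt⟩, ?_⟩
    intro z hz
    rw [← hOb]
    exact htO hz
  choose tb htbne htbsub using Hb
  -- bound all supports by a single index α
  set s : Set Idx.{u} := ⋃ b : ↥B₀, (((tb b).image Prod.fst : Finset Idx.{u}) : Set Idx.{u})
    with hs
  have hsc : s.Countable := Set.countable_iUnion fun b => (Finset.countable_toSet _)
  have hbound : ∃ α : Idx.{u}, ∀ β ∈ s, β < α := by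
    have h1 : #↥s < ((Cardinal.aleph 1 : Cardinal.{u}).ord).cof := by
      rw [Cardinal.isRegular_aleph_one.cof_eq]
      exact lt_of_le_of_lt (Cardinal.mk_le_aleph0_iff.mpr (Set.countable_coe_iff.mpr hsc))
        Cardinal.aleph0_lt_aleph_one
    set f : ↥s → Ordinal.{u} := fun β => Ordinal.typein (α := Idx.{u}) (· < ·) β.1 with hf
    have h2 : Ordinal.lsub f < Ordinal.type (α := Idx.{u}) (· < ·) := by
      rw [type_Idx]
      refine Ordinal.lsub_lt_ord h1 ?_
      intro i
      have := Ordinal.typein_lt_type (α := Idx.{u}) (· < ·) i.1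
      rwa [type_Idx] at this
    refine ⟨Ordinal.enum (α := Idx.{u}) (· < ·) ⟨Ordinal.lsub f, h2⟩, ?_⟩
    intro β hβ
    have h3 : f ⟨β, hβ⟩ < Ordinal.lsub f := Ordinal.lt_lsub f ⟨β, hβ⟩
    have h4 := Ordinal.typein_enum (α := Idx.{u}) (· < ·) h2
    rw [← Ordinal.typein_lt_typein (α := Idx.{u}) (· < ·)]
    rw [h4]
    exact h3
  obtain ⟨α, hα⟩ := hbound
  -- the stage-α witness
  obtain ⟨⟨xα, hxαK, hxα1⟩, hkill⟩ := gfam_spec hK hbig α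
  set V : Set ↥(pmap K '' K) := Subtype.val ⁻¹' ((fun y : Idx.{u} → ℝ => y α) ⁻¹' Ioo (1/2 : ℝ) 2) with hV
  have hVopen : IsOpen V :=
    ((isOpen_Ioo).preimage (continuous_apply α)).preimage continuous_subtype_val
  have hVne : V.Nonempty := by
    refine ⟨⟨pmap K xα, mem_image_of_mem _ hxαK⟩, ?_⟩
    simp only [hV, mem_preimage]
    have : pmap K xα α = 1 := hxα1
    rw [this]
    constructor <;> norm_num
  obtain ⟨b, hbB, hbV⟩ := hpi.2 V hVopen hVne
  set t := tb ⟨b, hbB⟩ with ht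
  set A : Set X := ⋂ p ∈ t, ⇑(gfam K p.1) ⁻¹' Ioo (p.2.1 : ℝ) (p.2.2 : ℝ) with hA
  have key : ∀ x, x ∈ A ↔ pmap K x ∈ bas t := by
    intro x
    rw [mem_bas, hA]
    simp only [mem_iInter, mem_preimage]
    rfl
  have hAmem : A ∈ cylFam (gfam K '' Iio α) := by
    refine ⟨t.image (fun p => (gfam K p.1, p.2)), ?_, ?_⟩
    · intro q hq
      rw [Finset.mem_image] at hq
      obtain ⟨p, hp, rfl⟩ := hq
      refine mem_image_of_mem _ ?_
      rw [mem_Iio]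
      refine hα p.1 ?_
      rw [hs, mem_iUnion]
      exact ⟨⟨b, hbB⟩, by
        rw [Finset.coe_image]
        exact mem_image_of_mem _ hp⟩
    · ext z
      simp only [hA, mem_iInter, mem_preimage, Finset.mem_image]
      constructor
      · intro h q hq
        obtain ⟨p, hp, rfl⟩ := hq
        exact h p hp
      · intro h p hp
        exact h (gfam K p.1, p.2) ⟨p, hp, rfl⟩
  have hAne : (A ∩ K).Nonempty := by
    obtain ⟨u, hu⟩ := htbne ⟨b, hbB⟩
    obtain ⟨x, hxK, hxu⟩ := u.2
    refine ⟨x, ?_, hxK⟩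
    rw [key]
    rw [hxu]
    exact hu
  have hsubA : A ∩ K ⊆ {y | 0 < gfam K α y} := by
    rintro x ⟨hxA, hxK⟩
    have h1 : (⟨pmap K x, mem_image_of_mem _ hxK⟩ : ↥(pmap K '' K)) ∈ (Subtype.val ⁻¹' bas t : Set ↥(pmap K '' K)) :=
      (key x).mp hxA
    have h2 := hbV (htbsub ⟨b, hbB⟩ h1)
    simp only [hV, mem_preimage] at h2
    have h3 : (1/2 : ℝ) < pmap K x α := h2.1
    have : pmap K x α = gfam K α x := rfl
    rw [this] at h3
    simp only [mem_setOf_eq]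
    linarith
  exact hAne.ne_empty (hkill A hAmem hsubA)

end Construction2

section DenseBridge

variable {X : Type u} [TopologicalSpace X]

lemma noCtbl_closure {Y : Set X} (hYpi : Cardinal.aleph 0 < piWeight ↥Y) :
    NoCtblPiBase ↥(closure Y) := by
  intro B hB hc
  have hYsub : Y ⊆ closure Y := subset_closure
  set j : ↥Y → ↥(closure Y) := Set.inclusion hYsub with hj
  have hne' : ∀ b ∈ B, ((j ⁻¹' b) : Set ↥Y).Nonempty := by
    intro b hb
    obtain ⟨hbo, u, hu⟩ := hB.1 b hb
    obtain ⟨W, hW, hWb⟩ := isOpen_induced_iff.mp hbo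
    have huW : (u : X) ∈ W := by rw [← hWb] at hu; exact hu
    have h2 : (W ∩ Y).Nonempty := by
      have h3 := u.2
      rw [mem_closure_iff] at h3
      exact h3 W hW huW
    obtain ⟨y, hyW, hyY⟩ := h2
    refine ⟨⟨y, hyY⟩, ?_⟩
    show j ⟨y, hyY⟩ ∈ b
    rw [← hWb]
    exact hyW
  have hpi' : IsPiBase ((fun b => j ⁻¹' b) '' B) := by
    constructor
    · rintro b' ⟨b, hb, rfl⟩
      exact ⟨(hB.1 b hb).1.preimage (continuous_inclusion hYsub), hne' b hb⟩
    · intro U hU hUne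
      obtain ⟨V, hV, hVU⟩ := isOpen_induced_iff.mp hU
      have hVo : IsOpen (Subtype.val ⁻¹' V : Set ↥(closure Y)) :=
        hV.preimage continuous_subtype_val
      have hne2 : (Subtype.val ⁻¹' V : Set ↥(closure Y)).Nonempty := by
        obtain ⟨u, hu⟩ := hUne
        refine ⟨⟨u.1, hYsub u.2⟩, ?_⟩
        show (u : X) ∈ V
        rw [← hVU] at hu
        exact hu
      obtain ⟨b, hb, hbsub⟩ := hB.2 _ hVo hne2
      refine ⟨j ⁻¹' b, ⟨b, hb, rfl⟩, ?_⟩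
      intro y hy
      have h5 : (y : X) ∈ V := hbsub hy
      rw [← hVU]
      exact h5
  exact noCtbl_of_aleph0_lt_piWeight hYpi _ hpi' (hc.image _)

end DenseBridge

theorem exists_compact_ccc_subspace_piWeight_aleph_one {X : Type u}
    [TopologicalSpace X] [CompactSpace X] [T2Space X]
    (Y : Set X) (hYccc : CCC Y) (hYpi : Cardinal.aleph 0 < piWeight Y) :
    ∃ Z : Set X, IsCompact Z ∧ CCC Z ∧ piWeight Z = Cardinal.aleph 1 := by
  classical
  -- Y is nonempty
  have hYne : Y.Nonempty := by
    rcases eq_empty_or_nonempty Y with h | h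
    · exfalso
      have hpb : IsPiBase (∅ : Set (Set ↥Y)) := by
        refine ⟨fun b hb => hb.elim, fun U hU hUne => ?_⟩
        obtain ⟨u, -⟩ := hUne
        have h2 := u.2
        exact absurd h2 (by simp [h])
      have := piWeight_le_mk hpb
      rw [Cardinal.mk_eq_zero, le_zero_iff] at this
      rw [this] at hYpi
      exact absurd hYpi (by simp)
    · exact h
  set K : Set X := closure Y with hKdef
  have hKcl : IsClosed K := isClosed_closure
  have hKco : IsCompact K := hKcl.isCompact
  have hYsub : Y ⊆ K := subset_closure
  have hKne : K.Nonempty := hYne.mono hYsub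
  have hbig : NoCtblPiBase ↥K := noCtbl_closure hYpi
  -- K is ccc
  have hKccc : CCC ↥K := by
    refine CCC.of_map (Set.inclusion hYsub) (continuous_inclusion hYsub) ?_ hYccc
    intro U hU hUne
    obtain ⟨W, hW, hWU⟩ := isOpen_induced_iff.mp hU
    obtain ⟨u, hu⟩ := hUne
    have huW : (u : X) ∈ W := by rw [← hWU] at hu; exact hu
    have h3 : (u : X) ∈ closure Y := u.2
    rw [mem_closure_iff] at h3
    obtain ⟨y, hyW, hyY⟩ := h3 W hW huW
    refine ⟨⟨y, hyY⟩, ?_⟩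
    show Set.inclusion hYsub ⟨y, hyY⟩ ∈ U
    rw [← hWU]
    exact hyW
  -- the image space T
  set T : Set (Idx.{u} → ℝ) := pmap K '' K with hTdef
  have hTco : IsCompact T := hKco.image (pmap_continuous K)
  have hTne : T.Nonempty := hKne.image _
  have hTnoc : NoCtblPiBase ↥T := T_noCtbl hKcl hbig
  obtain ⟨BT, hBTpi, hBTcard⟩ := T_small_piBase (X := X) K
  -- T is ccc
  set ρK : ↥K → ↥T := fun x => ⟨pmap K x.1, mem_image_of_mem _ x.2⟩ with hρK
  have hρKcont : Continuous ρK :=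
    Continuous.subtype_mk ((pmap_continuous K).comp continuous_subtype_val) _
  have hρKsurj : Function.Surjective ρK := by
    rintro ⟨t, ht⟩
    obtain ⟨x, hxK, hxt⟩ := ht
    exact ⟨⟨x, hxK⟩, Subtype.ext hxt⟩
  have hTccc : CCC ↥T := by
    refine CCC.of_map ρK hρKcont ?_ hKccc
    intro U hU hUne
    obtain ⟨u, hu⟩ := hUne
    obtain ⟨x, hx⟩ := hρKsurj u
    exact ⟨x, by rw [mem_preimage, hx]; exact hu⟩
  -- Zorn: a minimal closed subset of K mapping onto T
  set 𝒮 : Set (Set X) := {F | F ⊆ K ∧ IsClosed F ∧ pmap K '' F = T} with h𝒮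
  have hKmem : K ∈ 𝒮 := ⟨subset_rfl, hKcl, rfl⟩
  have hchains : ∀ c ⊆ 𝒮, IsChain (· ⊆ ·) c → c.Nonempty →
      ∃ lb ∈ 𝒮, ∀ s ∈ c, lb ⊆ s := by
    intro c hc hchain hcne
    refine ⟨⋂₀ c, ⟨?_, ?_, ?_⟩, fun s hs => sInter_subset_of_mem hs⟩
    · obtain ⟨F, hF⟩ := hcne
      exact (sInter_subset_of_mem hF).trans (hc hF).1
    · exact isClosed_sInter fun F hF => (hc hF).2.1
    · apply subset_antisymm
      · obtain ⟨F, hF⟩ := hcne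
        calc pmap K '' ⋂₀ c ⊆ pmap K '' F := image_mono (sInter_subset_of_mem hF)
          _ = T := (hc hF).2.2
      · intro t ht
        haveI : Nonempty ↥c := hcne.to_subtype
        set fam : ↥c → Set X := fun F => ↑F ∩ pmap K ⁻¹' {t} with hfam
        have hdir : Directed (· ⊇ ·) fam := by
          intro F G
          rcases hchain.total F.2 G.2 with h | h
          · exact ⟨F, subset_rfl, inter_subset_inter_left _ h⟩
          · exact ⟨G, inter_subset_inter_left _ h, subset_rfl⟩
        have hne : ∀ F : ↥c, (fam F).Nonempty := by
          intro F
          have h4 := (hc F.2).2.2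
          have h5 : t ∈ pmap K '' ↑F := by rw [h4]; exact ht
          obtain ⟨x, hx, hxt⟩ := h5
          exact ⟨x, hx, by simp [hxt]⟩
        have hcomp : ∀ F : ↥c, IsCompact (fam F) :=
          fun F => ((hc F.2).2.1.isCompact).inter_right
            (isClosed_singleton.preimage (pmap_continuous K))
        have hcl : ∀ F : ↥c, IsClosed (fam F) :=
          fun F => (hc F.2).2.1.inter (isClosed_singleton.preimage (pmap_continuous K))
        obtain ⟨x, hx⟩ := IsCompact.nonempty_iInter_of_directed_nonempty_isCompact_isClosed
          fam hdir hne hcomp hcl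
        have hx1 : x ∈ ⋂₀ c := by
          intro F hF
          exact ((mem_iInter.mp hx) ⟨F, hF⟩).1
        have hx2 : pmap K x = t := by
          obtain ⟨F⟩ := ‹Nonempty ↥c›
          exact ((mem_iInter.mp hx) F).2
        exact ⟨x, hx1, hx2⟩
  obtain ⟨Z, hZsubK, hZmin⟩ := zorn_superset_nonempty 𝒮 hchains K hKmem
  -- properties of Z
  have hZ𝒮 : Z ∈ 𝒮 := hZmin.prop
  obtain ⟨hZK, hZcl, hπZ⟩ := hZ𝒮
  have hZco : IsCompact Z := hZcl.isCompact
  -- the restricted map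
  set ρ : ↥Z → ↥T := fun z => ⟨pmap K z.1, by rw [← hπZ]; exact mem_image_of_mem _ z.2⟩ with hρ
  have hρcont : Continuous ρ :=
    Continuous.subtype_mk ((pmap_continuous K).comp continuous_subtype_val) _
  have hρsurj : Function.Surjective ρ := by
    rintro ⟨t, ht⟩
    rw [← hπZ] at ht
    obtain ⟨x, hxZ, hxt⟩ := ht
    exact ⟨⟨x, hxZ⟩, Subtype.ext hxt⟩
  -- irreducibility
  have irr : ∀ W : Set X, IsOpen W → (W ∩ Z).Nonempty →
      ∃ t ∈ T, t ∉ pmap K '' (Z \ W) := by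
    intro W hW hWZ
    obtain ⟨x, hxW, hxZ⟩ := hWZ
    by_contra hcon
    push_neg at hcon
    have hsub2 : pmap K '' (Z \ W) = T := by
      apply subset_antisymm
      · rw [← hπZ]
        exact image_mono diff_subset
      · exact hcon
    have hmem2 : Z \ W ∈ 𝒮 :=
      ⟨diff_subset.trans hZK, hZcl.sdiff hW, hsub2⟩
    have := hZmin.2 hmem2 diff_subset hxZ
    exact this.2 hxW
  -- trace opens and the "pushforward" of relatively open sets
  have starOpen : ∀ W : Set X, IsOpen W →
      IsOpen (Subtype.val ⁻¹' (pmap K '' (Z \ W))ᶜ : Set ↥T) := by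
    intro W hW
    have h6 : IsCompact (pmap K '' (Z \ W)) := (hZco.diff hW).image (pmap_continuous K)
    exact (h6.isClosed.isOpen_compl).preimage continuous_subtype_val
  have starKey : ∀ (W : Set X) (z : ↥Z),
      (pmap K z.1 ∉ pmap K '' (Z \ W)) → z.1 ∈ W := by
    intro W z hz
    by_contra hzw
    exact hz (mem_image_of_mem _ ⟨z.2, hzw⟩)
  -- Z is ccc
  have hZccc : CCC ↥Z := by
    intro 𝒰 hop hdisj
    have hch : ∀ U : Set ↥Z, U ∈ 𝒰 → ∃ W : Set X, IsOpen W ∧ Subtype.val ⁻¹' W = U :=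
      fun U hU => isOpen_induced_iff.mp (hop U hU).1
    set f : Set ↥Z → Set ↥T := fun U =>
      if h : U ∈ 𝒰 then Subtype.val ⁻¹' (pmap K '' (Z \ (hch U h).choose))ᶜ else ∅ with hf
    -- each f U (U ∈ 𝒰) is open, nonempty, and ρ ⁻¹' (f U) ⊆ U
    have hfprop : ∀ U (h : U ∈ 𝒰), IsOpen (f U) ∧ (f U).Nonempty ∧ ρ ⁻¹' (f U) ⊆ U := by
      intro U h
      obtain ⟨hWo, hWeq⟩ := (hch U h).choose_spec
      set W := (hch U h).choose
      have hfU : f U = Subtype.val ⁻¹' (pmap K '' (Z \ W))ᶜ := by rw [hf]; simp [h]; rfl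
      have hWZne : (W ∩ Z).Nonempty := by
        obtain ⟨u, hu⟩ := (hop U h).2
        have : (u : Z) ∈ Subtype.val ⁻¹' W := by rw [hWeq]; exact hu
        exact ⟨u.1, this, u.2⟩
      obtain ⟨t, htT, htno⟩ := irr W hWo hWZne
      refine ⟨hfU ▸ starOpen W hWo, ⟨⟨t, htT⟩, by rw [hfU]; exact htno⟩, ?_⟩
      intro z hz
      rw [hfU] at hz
      have : z.1 ∈ W := starKey W z hz
      rw [← hWeq]
      exact this
    have hV : (f '' 𝒰).Countable := by
      refine hTccc _ ?_ ?_
      · rintro V ⟨U, hU, rfl⟩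
        exact ⟨(hfprop U hU).1, (hfprop U hU).2.1⟩
      · rintro V₁ ⟨U₁, hU₁, rfl⟩ V₂ ⟨U₂, hU₂, rfl⟩ hne
        have hUne : U₁ ≠ U₂ := fun hq => hne (by rw [hq])
        simp only [Function.onFun, id_eq]
        rw [Set.disjoint_left]
        intro t ht1 ht2
        obtain ⟨z, hz⟩ := hρsurj t
        have hz1 : z ∈ U₁ := (hfprop U₁ hU₁).2.2 (by rw [mem_preimage, hz]; exact ht1)
        have hz2 : z ∈ U₂ := (hfprop U₂ hU₂).2.2 (by rw [mem_preimage, hz]; exact ht2)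
        exact ((hdisj hU₁ hU₂ hUne).ne_of_mem hz1 hz2) rfl
    refine Set.countable_of_injective_of_countable_image ?_ hV
    intro U₁ hU₁ U₂ hU₂ heq
    by_contra hne
    obtain ⟨t, ht⟩ := (hfprop U₁ hU₁).2.1
    have ht2 : t ∈ f U₂ := by rw [show f U₂ = f U₁ from heq.symm]; exact ht
    obtain ⟨z, hz⟩ := hρsurj t
    have hz1 : z ∈ U₁ := (hfprop U₁ hU₁).2.2 (by rw [mem_preimage, hz]; exact ht)
    have hz2 : z ∈ U₂ := (hfprop U₂ hU₂).2.2 (by rw [mem_preimage, hz]; exact ht2)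
    exact ((hdisj hU₁ hU₂ hne).ne_of_mem hz1 hz2) rfl
  -- π-weight of Z is at most ℵ₁
  have hZle : piWeight ↥Z ≤ Cardinal.aleph 1 := by
    have hBZpi : IsPiBase ((fun b => ρ ⁻¹' b) '' BT) := by
      constructor
      · rintro b' ⟨b, hb, rfl⟩
        refine ⟨(hBTpi.1 b hb).1.preimage hρcont, ?_⟩
        obtain ⟨y, hy⟩ := (hBTpi.1 b hb).2
        obtain ⟨z, hz⟩ := hρsurj y
        exact ⟨z, by rw [mem_preimage, hz]; exact hy⟩
      · intro U hU hUne
        obtain ⟨W, hWo, hWeq⟩ := isOpen_induced_iff.mp hU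
        have hWZne : (W ∩ Z).Nonempty := by
          obtain ⟨u, hu⟩ := hUne
          have : (u : Z) ∈ Subtype.val ⁻¹' W := by rw [hWeq]; exact hu
          exact ⟨u.1, this, u.2⟩
        obtain ⟨t, htT, htno⟩ := irr W hWo hWZne
        have hVo := starOpen W hWo
        have hVne : (Subtype.val ⁻¹' (pmap K '' (Z \ W))ᶜ : Set ↥T).Nonempty :=
          ⟨⟨t, htT⟩, htno⟩
        obtain ⟨b, hb, hbsub⟩ := hBTpi.2 _ hVo hVne
        refine ⟨ρ ⁻¹' b, ⟨b, hb, rfl⟩, ?_⟩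
        intro z hz
        have h7 : z.1 ∈ W := starKey W z (hbsub hz)
        rw [← hWeq]
        exact h7
    refine le_trans (piWeight_le_mk hBZpi) (le_trans Cardinal.mk_image_le hBTcard)
  -- Z has no countable π-base
  have hZnoc : NoCtblPiBase ↥Z := by
    intro B₀ hpi hc
    have hch : ∀ b : Set ↥Z, b ∈ B₀ → ∃ W : Set X, IsOpen W ∧ Subtype.val ⁻¹' W = b :=
      fun b hb => isOpen_induced_iff.mp (hpi.1 b hb).1
    set f : Set ↥Z → Set ↥T := fun b =>
      if h : b ∈ B₀ then Subtype.val ⁻¹' (pmap K '' (Z \ (hch b h).choose))ᶜ else ∅ with hf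
    have hfprop : ∀ b (h : b ∈ B₀), IsOpen (f b) ∧ (f b).Nonempty ∧
        ∀ t : ↥T, t ∈ f b → ∀ z : ↥Z, ρ z = t → z ∈ b := by
      intro b h
      obtain ⟨hWo, hWeq⟩ := (hch b h).choose_spec
      set W := (hch b h).choose
      have hfb : f b = Subtype.val ⁻¹' (pmap K '' (Z \ W))ᶜ := by rw [hf]; simp [h]; rfl
      have hWZne : (W ∩ Z).Nonempty := by
        obtain ⟨u, hu⟩ := (hpi.1 b h).2
        have : (u : Z) ∈ Subtype.val ⁻¹' W := by rw [hWeq]; exact hu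
        exact ⟨u.1, this, u.2⟩
      obtain ⟨t, htT, htno⟩ := irr W hWo hWZne
      refine ⟨hfb ▸ starOpen W hWo, ⟨⟨t, htT⟩, by rw [hfb]; exact htno⟩, ?_⟩
      intro t ht z hzt
      have ht' : (pmap K z.1 : Idx.{u} → ℝ) ∉ pmap K '' (Z \ W) := by
        rw [hfb] at ht
        have : (t : Idx.{u} → ℝ) ∉ pmap K '' (Z \ W) := ht
        rw [← hzt] at this
        exact this
      have : z.1 ∈ W := starKey W z ht'
      rw [← hWeq]
      exact this
    have hTpi' : IsPiBase (f '' B₀) := by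
      constructor
      · rintro b' ⟨b, hb, rfl⟩
        exact ⟨(hfprop b hb).1, (hfprop b hb).2.1⟩
      · intro O hO hOne
        have hpre : (ρ ⁻¹' O).Nonempty := by
          obtain ⟨y, hy⟩ := hOne
          obtain ⟨z, hz⟩ := hρsurj y
          exact ⟨z, by rw [mem_preimage, hz]; exact hy⟩
        obtain ⟨b, hb, hbsub⟩ := hpi.2 (ρ ⁻¹' O) (hO.preimage hρcont) hpre
        refine ⟨f b, ⟨b, hb, rfl⟩, ?_⟩
        intro t ht
        obtain ⟨z, hz⟩ := hρsurj t
        have : z ∈ b := (hfprop b hb).2.2 t ht z hz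
        have h8 : z ∈ ρ ⁻¹' O := hbsub this
        rw [mem_preimage, hz] at h8
        exact h8
    exact hTnoc _ hTpi' (hc.image _)
  exact ⟨Z, hZco, hZccc, piWeight_eq_aleph_one hZnoc hZle⟩
end
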